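/- For any c > 0 and C > 0 there exists R > 0 with the following property: for every h ≥ 0 with h ≠ 1 (with k = min{h,1}), every admissible phase φ with E_h(φ) ≤ C, and every a ∈ ℝ with |cos φ(a) − k| ≥ c, one has |cos φ(x) − k| ≥ c/2 for all x ∈ (a − R, a + R), and ∫_{a−R}^{a+R} W_h(φ(x)) dx ≥ (1/2)∫_{a−R}^{a+R} (k − cos φ(x))² dx ≥ c²R/4. -/

import Mathlib

open Real MeasureTheory Filter Topology
open scoped ENNReal NNReal

noncomputable section

/-- `k = min {h, 1}`. -/
def kparam (h : ℝ) : ℝ := min h 1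

/-- `α = arccos k ∈ [0, π/2]`. -/
def alphaParam (h : ℝ) : ℝ := Real.arccos (kparam h)

/-- The anisotropy potential `W_h(θ) = (1/2)(cos²θ − 2h cos θ + 2hk − k²)`. -/
def Wpot (h θ : ℝ) : ℝ :=
  (1/2) * ((Real.cos θ)^2 - 2*h*Real.cos θ + 2*h*(kparam h) - (kparam h)^2)

/-- The set `2πℤ + {−α, α}` of allowed limits at `±∞`. -/
def limSet (h : ℝ) : Set ℝ :=
  {y | ∃ n : ℤ, y = 2*Real.pi*n + alphaParam h ∨ y = 2*Real.pi*n - alphaParam h}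

/-- The total energy `E_h(φ)`, valued in `[0, ∞]`:
exchange + anisotropy energy plus the stray-field (homogeneous `H^{1/2}`) energy. -/
def energy (h : ℝ) (φ : ℝ → ℝ) : ℝ≥0∞ :=
  ENNReal.ofReal (1/2) *
      (∫⁻ x : ℝ, ENNReal.ofReal ((deriv φ x)^2 + 2 * Wpot h (φ x))) +
    ENNReal.ofReal (1/(4*Real.pi)) *
      (∫⁻ s : ℝ, ∫⁻ t : ℝ,
        ENNReal.ofReal ((Real.cos (φ s) - Real.cos (φ t))^2 / (s - t)^2))

/-- An admissible phase: `C¹`, limits at `±∞` in `2πℤ + {−α, α}`, finite energy. -/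
def Admissible (h : ℝ) (φ : ℝ → ℝ) : Prop :=
  ContDiff ℝ 1 φ ∧
    (∃ L ∈ limSet h, Tendsto φ atTop (𝓝 L)) ∧
    (∃ L ∈ limSet h, Tendsto φ atBot (𝓝 L)) ∧
    energy h φ < ⊤

/-- The winding number `deg(φ) = (φ(+∞) − φ(−∞))/(2π)`. -/
def deg (φ : ℝ → ℝ) : ℝ :=
  (limUnder atTop φ - limUnder atBot φ) / (2*Real.pi)

/-- `𝒜_h(d)`: admissible phases of winding number `d`. -/
def AA (h d : ℝ) : Set (ℝ → ℝ) := {φ | Admissible h φ ∧ deg φ = d}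

/-- `ℰ_h(d) = inf {E_h(φ) : φ ∈ 𝒜_h(d)}`. -/
def Einf (h d : ℝ) : ℝ≥0∞ := ⨅ φ ∈ AA h d, energy h φ

/-- `D_α = {n + j·α/π : n ∈ ℤ, j ∈ {−1, 0, 1}}`. -/
def Dset (h : ℝ) : Set ℝ :=
  {d | ∃ n j : ℤ, (j = -1 ∨ j = 0 ∨ j = 1) ∧ d = n + j * alphaParam h / Real.pi}

/-- Lipschitz bound for cosine. -/
lemma abs_cos_sub_cos_le' (x y : ℝ) : |Real.cos x - Real.cos y| ≤ |x - y| := by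
  rw [Real.cos_sub_cos]
  have h1 : |Real.sin ((x+y)/2)| ≤ 1 := Real.abs_sin_le_one _
  have h2 : |Real.sin ((x-y)/2)| ≤ |(x-y)/2| := Real.abs_sin_le_abs
  have h3 : |(x-y)/2| = |x - y|/2 := by rw [abs_div]; norm_num
  calc |(-2) * Real.sin ((x+y)/2) * Real.sin ((x-y)/2)|
      = 2 * (|Real.sin ((x+y)/2)| * |Real.sin ((x-y)/2)|) := by
        rw [abs_mul, abs_mul]; norm_num [mul_assoc]
    _ ≤ 2 * (1 * (|x-y|/2)) := by gcongr; exact h3 ▸ h2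
    _ = |x - y| := by ring

/-- The potential dominates half the squared deflection. -/
lemma half_sq_le_Wpot (h : ℝ) (hh : 0 ≤ h) (θ : ℝ) :
    (1/2) * (kparam h - Real.cos θ)^2 ≤ Wpot h θ := by
  have hc1 := Real.cos_le_one θ
  have hc2 := Real.neg_one_le_cos θ
  rcases le_or_gt h 1 with hle | hlt
  · have hk : kparam h = h := min_eq_left hle
    rw [hk]; unfold Wpot; rw [hk]; nlinarith
  · have hk : kparam h = 1 := min_eq_right hlt.le
    rw [hk]; unfold Wpot; rw [hk]; nlinarith

lemma Wpot_nonneg' (h : ℝ) (hh : 0 ≤ h) (θ : ℝ) : 0 ≤ Wpot h θ :=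
  le_trans (by positivity) (half_sq_le_Wpot h hh θ)

lemma interval_le_of_lintegral_le (f : ℝ → ℝ) (hf : Continuous f) (hnn : ∀ x, 0 ≤ f x)
    (M : ℝ) (hM0 : 0 ≤ M) (hM : ∫⁻ x, ENNReal.ofReal (f x) ≤ ENNReal.ofReal M)
    (u v : ℝ) (huv : u ≤ v) : (∫ x in u..v, f x) ≤ M := by
  rw [intervalIntegral.integral_of_le huv]
  rw [MeasureTheory.integral_eq_lintegral_of_nonneg_ae (ae_of_all _ hnn)
    hf.aestronglyMeasurable]
  have h1 : (∫⁻ x in Set.Ioc u v, ENNReal.ofReal (f x)) ≤ ENNReal.ofReal M :=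
    le_trans (setLIntegral_le_lintegral _ _) hM
  calc (∫⁻ x in Set.Ioc u v, ENNReal.ofReal (f x)).toReal
      ≤ (ENNReal.ofReal M).toReal := ENNReal.toReal_mono ENNReal.ofReal_ne_top h1
    _ = M := ENNReal.toReal_ofReal hM0

/-- Deflections of `cos φ` away from `k` cost a definite amount of
anisotropy energy on an interval of universal length. -/
theorem deflections_cost_energy (c C : ℝ) (hc : 0 < c) (hC : 0 < C) :
    ∃ R : ℝ, 0 < R ∧ ∀ h : ℝ, 0 ≤ h → h ≠ 1 → ∀ φ : ℝ → ℝ, Admissible h φ →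
      energy h φ ≤ ENNReal.ofReal C → ∀ a : ℝ, c ≤ |Real.cos (φ a) - kparam h| →
        (∀ x ∈ Set.Ioo (a - R) (a + R), c/2 ≤ |Real.cos (φ x) - kparam h|) ∧
        ((1/2) * ∫ x in (a - R)..(a + R), (kparam h - Real.cos (φ x))^2) ≤
          (∫ x in (a - R)..(a + R), Wpot h (φ x)) ∧
        c^2 * R / 4 ≤ (1/2) * ∫ x in (a - R)..(a + R), (kparam h - Real.cos (φ x))^2 := by
  refine ⟨c^2/(8*C), by positivity, ?_⟩
  intro h hh _ φ hφ hE a ha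
  set R := c^2/(8*C) with hRdef
  have hR : 0 < R := by positivity
  obtain ⟨hsm, -, -, -⟩ := hφ
  have hφc : Continuous φ := hsm.continuous
  have hdc : Continuous (deriv φ) := hsm.continuous_deriv le_rfl
  have hW0 : ∀ θ, 0 ≤ Wpot h θ := Wpot_nonneg' h hh
  -- global L² bound on the derivative
  have hL : (∫⁻ x, ENNReal.ofReal ((deriv φ x)^2)) ≤ ENNReal.ofReal (2*C) := by
    have h2 : ENNReal.ofReal (1/2) *
        (∫⁻ x, ENNReal.ofReal ((deriv φ x)^2 + 2*Wpot h (φ x))) ≤ ENNReal.ofReal C := by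
      rw [energy] at hE
      exact le_trans le_self_add hE
    have hmono : (∫⁻ x, ENNReal.ofReal ((deriv φ x)^2)) ≤
        ∫⁻ x, ENNReal.ofReal ((deriv φ x)^2 + 2*Wpot h (φ x)) :=
      lintegral_mono fun x => ENNReal.ofReal_le_ofReal (by nlinarith [hW0 (φ x)])
    calc (∫⁻ x, ENNReal.ofReal ((deriv φ x)^2))
        ≤ ∫⁻ x, ENNReal.ofReal ((deriv φ x)^2 + 2*Wpot h (φ x)) := hmono
      _ = ENNReal.ofReal 2 * (ENNReal.ofReal (1/2) *
            ∫⁻ x, ENNReal.ofReal ((deriv φ x)^2 + 2*Wpot h (φ x))) := by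
          rw [← mul_assoc, ← ENNReal.ofReal_mul (by norm_num)]
          norm_num
      _ ≤ ENNReal.ofReal 2 * ENNReal.ofReal C := mul_le_mul_right h2 _
      _ = ENNReal.ofReal (2*C) := by rw [← ENNReal.ofReal_mul (by norm_num)]
  have hIb : ∀ u v : ℝ, u ≤ v → (∫ x in u..v, (deriv φ x)^2) ≤ 2*C :=
    fun u v huv => interval_le_of_lintegral_le _ (hdc.pow 2) (fun x => sq_nonneg _)
      (2*C) (by positivity) hL u v huv
  set ε := 4*C/c with hεdef
  have hε : 0 < ε := by positivity
  -- key closeness estimate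
  have key : ∀ u v : ℝ, u ≤ v → v - u ≤ R → |φ v - φ u| ≤ c/2 := by
    intro u v huv hlen
    have hftc : φ v - φ u = ∫ x in u..v, deriv φ x :=
      (intervalIntegral.integral_deriv_eq_sub
        (fun x _ => (hsm.differentiable one_ne_zero).differentiableAt)
        (hdc.intervalIntegrable u v)).symm
    rw [hftc]
    have h1 : |∫ x in u..v, deriv φ x| ≤ ∫ x in u..v, |deriv φ x| :=
      intervalIntegral.abs_integral_le_integral_abs huv
    have h2 : (∫ x in u..v, |deriv φ x|) ≤
        ∫ x in u..v, ((2*ε)⁻¹ * (deriv φ x)^2 + ε/2) := by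
      apply intervalIntegral.integral_mono_on huv
      · exact (hdc.abs).intervalIntegrable u v
      · exact ((continuous_const.mul (hdc.pow 2)).add continuous_const).intervalIntegrable u v
      · intro x _
        have hsq := sq_nonneg (|deriv φ x| - ε)
        have habs := sq_abs (deriv φ x)
        rw [← sub_nonneg]
        have : (2*ε)⁻¹ * (deriv φ x)^2 + ε/2 - |deriv φ x| =
            (2*ε)⁻¹ * ((|deriv φ x| - ε)^2) := by
          field_simp
          nlinarith [sq_abs (deriv φ x)]
        rw [this]
        positivity
    have h3 : (∫ x in u..v, ((2*ε)⁻¹ * (deriv φ x)^2 + ε/2)) =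
        (2*ε)⁻¹ * (∫ x in u..v, (deriv φ x)^2) + (v - u) * (ε/2) := by
      rw [intervalIntegral.integral_add (f := fun x => (2*ε)⁻¹ * (deriv φ x)^2)
            (g := fun _ => ε/2)
            ((continuous_const.mul (hdc.pow 2)).intervalIntegrable u v)
            (intervalIntegrable_const),
          intervalIntegral.integral_const_mul, intervalIntegral.integral_const,
          smul_eq_mul]
    have h4 : (2*ε)⁻¹ * (∫ x in u..v, (deriv φ x)^2) ≤ c/4 := by
      have e1 : (2*ε)⁻¹ * (2*C) = c/4 := by
        rw [hεdef]; field_simp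
      calc (2*ε)⁻¹ * (∫ x in u..v, (deriv φ x)^2) ≤ (2*ε)⁻¹ * (2*C) := by
            have := hIb u v huv
            gcongr
          _ = c/4 := e1
    have h5 : (v - u) * (ε/2) ≤ c/4 := by
      have e2 : R * (ε/2) = c/4 := by
        rw [hεdef, hRdef]; field_simp; ring
      calc (v - u) * (ε/2) ≤ R * (ε/2) := by
            apply mul_le_mul_of_nonneg_right hlen (by positivity)
          _ = c/4 := e2
    linarith
  -- Icc bound
  have hIcc : ∀ x ∈ Set.Icc (a-R) (a+R), c/2 ≤ |Real.cos (φ x) - kparam h| := by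
    intro x hx
    have hclose : |Real.cos (φ x) - Real.cos (φ a)| ≤ c/2 := by
      rcases le_total a x with hax | hxa
      · exact le_trans (abs_cos_sub_cos_le' _ _) (key a x hax (by linarith [hx.2]))
      · calc |Real.cos (φ x) - Real.cos (φ a)|
            = |Real.cos (φ a) - Real.cos (φ x)| := abs_sub_comm _ _
          _ ≤ |φ a - φ x| := abs_cos_sub_cos_le' _ _
          _ ≤ c/2 := key x a hxa (by linarith [hx.1])
    have htri : |Real.cos (φ a) - kparam h| ≤
        |Real.cos (φ a) - Real.cos (φ x)| + |Real.cos (φ x) - kparam h| :=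
      abs_sub_le _ _ _
    have : |Real.cos (φ a) - Real.cos (φ x)| = |Real.cos (φ x) - Real.cos (φ a)| :=
      abs_sub_comm _ _
    linarith
  refine ⟨fun x hx => hIcc x (Set.Ioo_subset_Icc_self hx), ?_, ?_⟩
  · -- second bullet
    have hi1 : IntervalIntegrable (fun x => (1/2) * (kparam h - Real.cos (φ x))^2)
        volume (a-R) (a+R) :=
      (continuous_const.mul
        (((continuous_const.sub (Real.continuous_cos.comp hφc)).pow 2))).intervalIntegrable _ _
    have hi2 : IntervalIntegrable (fun x => Wpot h (φ x)) volume (a-R) (a+R) := by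
      apply Continuous.intervalIntegrable
      unfold Wpot
      fun_prop
    rw [← intervalIntegral.integral_const_mul]
    exact intervalIntegral.integral_mono_on (by linarith) hi1 hi2
      (fun x _ => half_sq_le_Wpot h hh (φ x))
  · -- third bullet
    have h8 : ∀ x ∈ Set.Icc (a-R) (a+R),
        (fun _ : ℝ => c^2/4) x ≤ (kparam h - Real.cos (φ x))^2 := by
      intro x hx
      have h9 := hIcc x hx
      nlinarith [sq_abs (Real.cos (φ x) - kparam h)]
    have hii3 : IntervalIntegrable (fun x => (kparam h - Real.cos (φ x))^2)
        volume (a-R) (a+R) :=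
      ((continuous_const.sub (Real.continuous_cos.comp hφc)).pow 2).intervalIntegrable _ _
    have h10 := intervalIntegral.integral_mono_on (a := a-R) (b := a+R)
      (by linarith) (intervalIntegrable_const) hii3 h8
    rw [intervalIntegral.integral_const, smul_eq_mul] at h10
    have : (a + R - (a - R)) * (c^2/4) = c^2 * R / 2 := by ring
    rw [this] at h10
    linarith
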